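/- Let H be a connected subgroup of O(n) such that H equals the identity component of its own normalizer in O(n). Then for any subgroup G of O(n) with identity component equal to H, the normalizer N_{O(n)}(G) has identity component equal to H, and hence G has finite index in N_{O(n)}(G). -/

import Mathlib

open NormedSpace Filter Topology Set

open Matrix

/-- The real orthogonal group `O(n)` as a topological group. -/
abbrev On (n : ℕ) : Type := ↥(Matrix.orthogonalGroup (Fin n) ℝ)

instance (n : ℕ) : IsTopologicalGroup (On n) where
  continuous_inv := Continuous.subtype_mk (continuous_star.comp continuous_subtype_val) _

/-- The identity component of a subgroup `H` of a topological group,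
viewed as a subgroup of the ambient group. -/
def idComp {G : Type*} [Group G] [TopologicalSpace G] [IsTopologicalGroup G]
    (H : Subgroup G) : Subgroup G :=
  (Subgroup.connectedComponentOfOne H).map H.subtype

/-- `W` is invariant under the natural action of `G ≤ O(n)` on `ℝⁿ`. -/
def Invariant {n : ℕ} (G : Subgroup (On n)) (W : Submodule ℝ (Fin n → ℝ)) : Prop :=
  ∀ g ∈ G, ∀ v ∈ W, Matrix.mulVec (g : Matrix (Fin n) (Fin n) ℝ) v ∈ W

/-- `V` is a nonzero irreducible `G`-invariant subspace of `ℝⁿ`. -/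
def IsIrred {n : ℕ} (G : Subgroup (On n)) (V : Submodule ℝ (Fin n → ℝ)) : Prop :=
  V ≠ ⊥ ∧ Invariant G V ∧ ∀ W ≤ V, Invariant G W → W = ⊥ ∨ W = V

section BanachLie

variable {A : Type*} [NormedRing A] [NormedAlgebra ℝ A] [CompleteSpace A]
variable {S : Set A}

noncomputable def ratAlgA : NormedAlgebra ℚ A := NormedAlgebra.restrictScalars ℚ ℝ A

attribute [local instance] ratAlgA

lemma S_pow (hmul : ∀ a ∈ S, ∀ b ∈ S, a * b ∈ S) (h1 : (1:A) ∈ S) {a : A} (ha : a ∈ S) :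
    ∀ k : ℕ, a ^ k ∈ S := by
  intro k; induction k with
  | zero => simpa using h1
  | succ k ih => rw [pow_succ]; exact hmul _ ih _ ha

lemma exp_neg_mem (hmul : ∀ a ∈ S, ∀ b ∈ S, a * b ∈ S)
    (hinv : ∀ a ∈ S, ∃ b ∈ S, a * b = 1 ∧ b * a = 1) {x : A}
    (hx : exp x ∈ S) : exp (-x) ∈ S := by
  obtain ⟨b, hbS, hab, hba⟩ := hinv _ hx
  have h1 : exp x * exp (-x) = 1 := by
    rw [← exp_add_of_commute ((Commute.refl x).neg_right)]; simp
  have hb : b = exp (-x) := by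
    calc b = b * (exp x * exp (-x)) := by rw [h1, mul_one]
    _ = (b * exp x) * exp (-x) := by rw [mul_assoc]
    _ = exp (-x) := by rw [hba, one_mul]
  rwa [← hb]

lemma exp_zsmul_mem (hmul : ∀ a ∈ S, ∀ b ∈ S, a * b ∈ S) (h1 : (1:A) ∈ S)
    (hinv : ∀ a ∈ S, ∃ b ∈ S, a * b = 1 ∧ b * a = 1) {x : A}
    (hx : exp x ∈ S) (c : ℤ) : exp (c • x) ∈ S := by
  rcases le_or_gt 0 c with h | h
  · lift c to ℕ using h
    rw [natCast_zsmul, NormedSpace.exp_nsmul]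
    exact S_pow hmul h1 hx c
  · obtain ⟨k, hk⟩ : ∃ k : ℕ, c = -(k : ℤ) := ⟨c.natAbs, by omega⟩
    subst hk
    have : (-(k:ℤ)) • x = -((k:ℕ) • x) := by
      rw [neg_zsmul, natCast_zsmul]
    rw [this]
    exact exp_neg_mem hmul hinv (by rw [NormedSpace.exp_nsmul]; exact S_pow hmul h1 hx k)

/-- The "Lie algebra" of a closed subgroup-like subset. -/
def lieSet (S : Set A) : Set A := {x | ∀ t : ℝ, exp (t • x) ∈ S}

lemma smul_mem_lieSet {x : A} (c : ℝ) (hx : x ∈ lieSet S) : c • x ∈ lieSet S := fun t => by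
  rw [smul_smul]; exact hx (t * c)

lemma zero_mem_lieSet (h1 : (1:A) ∈ S) : (0:A) ∈ lieSet S := fun t => by simp [h1]

lemma add_mem_lieSet (hS : IsClosed S) (hmul : ∀ a ∈ S, ∀ b ∈ S, a * b ∈ S)
    {x y : A} (hx : x ∈ lieSet S) (hy : y ∈ lieSet S) : x + y ∈ lieSet S := by
  intro t
  rcases eq_or_ne t 0 with rfl | ht
  · simpa using hx 0
  have hexp : HasStrictFDerivAt (exp)
      ((ContinuousLinearEquiv.refl ℝ A : A ≃L[ℝ] A) : A →L[ℝ] A) 0 := by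
    exact hasStrictFDerivAt_exp_zero (𝕂 := ℝ) (𝔸 := A)
  set Φ := hexp.toOpenPartialHomeomorph (exp) with hΦdef
  have hΦ0 : (0:A) ∈ Φ.source := hexp.mem_toOpenPartialHomeomorph_source
  have hΦcoe : ∀ z, Φ z = exp z := fun z => rfl
  have hΦ1 : (1:A) ∈ Φ.target := by
    have := hexp.image_mem_toOpenPartialHomeomorph_target
    rwa [exp_zero] at this
  have hsymm1 : Φ.symm 1 = 0 := by
    have h := Φ.left_inv hΦ0
    rwa [hΦcoe, exp_zero] at h
  set g : ℝ → A := fun u => exp (u • x) * exp (u • y) with hgdef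
  have hgS : ∀ u, g u ∈ S := fun u => hmul _ (hx u) _ (hy u)
  have hg0 : g 0 = 1 := by simp [hgdef]
  have hgderiv : HasDerivAt g (x + y) 0 := by
    have hx' : HasDerivAt (fun u : ℝ => exp (u • x)) x 0 := by
      have hlin : HasDerivAt (fun u : ℝ => u • x) x 0 := by
        simpa using (hasDerivAt_id (0:ℝ)).smul_const x
      have h2 : HasFDerivAt (exp) (1 : A →L[ℝ] A) ((0:ℝ) • x) := by
        rw [zero_smul]; exact hasStrictFDerivAt_exp_zero.hasFDerivAt
      simpa [Function.comp_def] using h2.comp_hasDerivAt 0 hlin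
    have hy' : HasDerivAt (fun u : ℝ => exp (u • y)) y 0 := by
      have hlin : HasDerivAt (fun u : ℝ => u • y) y 0 := by
        simpa using (hasDerivAt_id (0:ℝ)).smul_const y
      have h2 : HasFDerivAt (exp) (1 : A →L[ℝ] A) ((0:ℝ) • y) := by
        rw [zero_smul]; exact hasStrictFDerivAt_exp_zero.hasFDerivAt
      simpa [Function.comp_def] using h2.comp_hasDerivAt 0 hlin
    have := hx'.mul hy'
    simpa [hgdef, Pi.mul_def] using this
  have hev : ∀ᶠ u in 𝓝 (0:ℝ), g u ∈ Φ.target := by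
    have hT : Φ.target ∈ 𝓝 (1:A) := Φ.open_target.mem_nhds hΦ1
    have hc : ContinuousAt g 0 := hgderiv.continuousAt
    have := hc.preimage_mem_nhds (by rwa [hg0])
    exact this
  set f : ℝ → A := fun u => Φ.symm (g u) with hfdef
  have hf0 : f 0 = 0 := by rw [hfdef]; simp only; rw [hg0, hsymm1]
  have hfe : ∀ᶠ u in 𝓝 (0:ℝ), exp (f u) = g u := by
    filter_upwards [hev] with u hu
    exact Φ.right_inv hu
  have hlog : HasFDerivAt Φ.symm
      (((ContinuousLinearEquiv.refl ℝ A).symm : A ≃L[ℝ] A) : A →L[ℝ] A) 1 := by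
    have h := hexp.to_localInverse
    rw [exp_zero] at h
    exact h.hasFDerivAt
  have hfderiv : HasDerivAt f (x + y) 0 := by
    rw [← hg0] at hlog
    have := hlog.comp_hasDerivAt 0 hgderiv
    simpa [hfdef, Function.comp_def] using this
  have hslope : Tendsto (slope f 0) (𝓝[≠] 0) (𝓝 (x+y)) :=
    hasDerivAt_iff_tendsto_slope.mp hfderiv
  have hseq : Tendsto (fun m : ℕ => t / m) atTop (𝓝[≠] (0:ℝ)) := by
    refine tendsto_nhdsWithin_iff.mpr ⟨tendsto_const_div_atTop_nhds_zero_nat t, ?_⟩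
    filter_upwards [eventually_gt_atTop 0] with m hm
    have : (m:ℝ) ≠ 0 := Nat.cast_ne_zero.mpr hm.ne'
    exact div_ne_zero ht this
  have h1 : Tendsto (fun m : ℕ => t • slope f 0 (t / m)) atTop (𝓝 (t • (x+y))) :=
    ((hslope.comp hseq).const_smul t)
  have key : ∀ᶠ m : ℕ in atTop, exp (t • slope f 0 (t / m)) ∈ S := by
    have hmem : ∀ᶠ m : ℕ in atTop, exp (f (t/m)) = g (t/m) :=
      (hseq.mono_right nhdsWithin_le_nhds).eventually hfe
    filter_upwards [hmem, eventually_gt_atTop 0] with m hm hm0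
    have hmne : (m:ℝ) ≠ 0 := Nat.cast_ne_zero.mpr hm0.ne'
    have hsl : t • slope f 0 (t/m) = (m : ℕ) • f (t/m) := by
      rw [slope_def_module]
      rw [hf0, sub_zero, sub_zero, smul_smul,
        show ((m:ℕ) • f (t/↑m) : A) = (m:ℝ) • f (t/↑m) from (Nat.cast_smul_eq_nsmul ℝ m _).symm]
      congr 1
      field_simp
    rw [hsl, NormedSpace.exp_nsmul, hm]
    exact S_pow hmul (by rw [← hg0]; exact hgS 0) (hgS (t/m)) m
  exact hS.mem_of_tendsto ((exp_continuous.tendsto _).comp h1) key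

theorem exists_open_subset_connectedComponentIn
    [FiniteDimensional ℝ A] (hS : IsClosed S) (h1 : (1:A) ∈ S)
    (hmul : ∀ a ∈ S, ∀ b ∈ S, a * b ∈ S)
    (hinv : ∀ a ∈ S, ∃ b ∈ S, a * b = 1 ∧ b * a = 1) :
    ∃ U : Set A, IsOpen U ∧ (1:A) ∈ U ∧ ∀ a ∈ S, a ∈ U → a ∈ connectedComponentIn S 1 := by
  classical
  let K : Submodule ℝ A :=
    { carrier := lieSet S
      zero_mem' := zero_mem_lieSet h1
      add_mem' := fun hx hy => add_mem_lieSet hS hmul hx hy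
      smul_mem' := fun c x hx => smul_mem_lieSet c hx }
  obtain ⟨M, hM⟩ := K.exists_isCompl
  let pK : A →ₗ[ℝ] A := K.subtype.comp (K.projectionOnto M hM)
  let pM : A →ₗ[ℝ] A := M.subtype.comp (M.projectionOnto K hM.symm)
  have hsum : ∀ z, pK z + pM z = z := fun z =>
    Submodule.projection_add_projection_eq_self hM z
  let cK : A →L[ℝ] A := LinearMap.toContinuousLinearMap pK
  let cM : A →L[ℝ] A := LinearMap.toContinuousLinearMap pM
  have hcK : ∀ z, cK z ∈ lieSet S := fun z => (K.projectionOnto M hM z).2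
  have hcM : ∀ z, cM z ∈ M := fun z => (M.projectionOnto K hM.symm z).2
  set ψ : A → A := fun z => exp (cK z) * exp (cM z) with hψdef
  have hψ0 : ψ 0 = 1 := by simp [hψdef]
  have hψd : HasStrictFDerivAt ψ
      ((ContinuousLinearEquiv.refl ℝ A : A ≃L[ℝ] A) : A →L[ℝ] A) 0 := by
    have hKd : HasStrictFDerivAt (fun z => exp (cK z)) cK 0 := by
      have h2 : HasStrictFDerivAt (exp) (1 : A →L[ℝ] A) (cK 0) := by
        rw [map_zero]; exact hasStrictFDerivAt_exp_zero
      simpa [Function.comp_def, ContinuousLinearMap.one_def, ContinuousLinearMap.id_comp] using h2.comp 0 cK.hasStrictFDerivAt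
    have hMd : HasStrictFDerivAt (fun z => exp (cM z)) cM 0 := by
      have h2 : HasStrictFDerivAt (exp) (1 : A →L[ℝ] A) (cM 0) := by
        rw [map_zero]; exact hasStrictFDerivAt_exp_zero
      simpa [Function.comp_def, ContinuousLinearMap.one_def, ContinuousLinearMap.id_comp] using h2.comp 0 cM.hasStrictFDerivAt
    have hprod := hKd.mul' hMd
    change HasStrictFDerivAt ψ _ 0 at hprod
    convert hprod using 1
    ext z
    simp only [ContinuousLinearMap.add_apply, ContinuousLinearMap.coe_smul',
      Pi.smul_apply, ContinuousLinearMap.smulRight_apply, map_zero, exp_zero,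
      one_smul, smul_eq_mul, mul_one, ContinuousLinearEquiv.coe_coe,
      ContinuousLinearEquiv.refl_apply, MulOpposite.op_one]
    rw [add_comm]
    exact (hsum z).symm
  set Ψ := hψd.toOpenPartialHomeomorph ψ with hΨdef
  have hΨcoe : ∀ z, Ψ z = ψ z := fun z => rfl
  have hΨ0 : (0:A) ∈ Ψ.source := hψd.mem_toOpenPartialHomeomorph_source
  have hΨ1 : (1:A) ∈ Ψ.target := by
    have := hψd.image_mem_toOpenPartialHomeomorph_target
    rwa [hψ0] at this
  have claim : ∃ δ > 0, ∀ z : A, dist z (1:A) < δ → z ∈ S → z ∈ Ψ.target →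
      cM (Ψ.symm z) = 0 := by
    by_contra hcon
    push_neg at hcon
    choose! a ha1 ha2 ha3 ha4 using fun m : ℕ =>
      hcon (1/(m+1)) (by positivity)
    have haT : Tendsto a atTop (𝓝 1) := by
      apply tendsto_iff_dist_tendsto_zero.mpr
      exact squeeze_zero (fun m => dist_nonneg) (fun m => (ha1 m).le)
        tendsto_one_div_add_atTop_nhds_zero_nat
    set X : ℕ → A := fun m => Ψ.symm (a m) with hXdef
    have hXa : ∀ m, ψ (X m) = a m := fun m => Ψ.right_inv (ha3 m)
    have hX0 : Tendsto X atTop (𝓝 0) := by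
      have h := Ψ.tendsto_symm hΨ0
      rw [hΨcoe, hψ0] at h
      exact h.comp haT
    set Z : ℕ → A := fun m => cM (X m) with hZdef
    have hZ0 : Tendsto Z atTop (𝓝 0) := by
      have := (cM.continuous.tendsto 0).comp hX0
      simpa [Function.comp_def] using this
    have hZS : ∀ m, exp (Z m) ∈ S := by
      intro m
      have hnegY : exp (-(cK (X m))) ∈ S := by
        have := hcK (X m) (-1)
        simpa using this
      have hcalc : exp (-(cK (X m))) * ψ (X m) = exp (Z m) := by
        rw [hψdef]
        simp only
        rw [← mul_assoc, ← exp_add_of_commute ((Commute.refl (cK (X m))).neg_left),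
          neg_add_cancel, exp_zero, one_mul]
      rw [hXa m] at hcalc
      rw [← hcalc]
      exact hmul _ hnegY _ (ha2 m)
    set W : ℕ → A := fun m => (‖Z m‖)⁻¹ • Z m with hWdef
    have hWs : ∀ m, W m ∈ Metric.sphere (0:A) 1 := by
      intro m
      have hz : ‖Z m‖ ≠ 0 := norm_ne_zero_iff.mpr (ha4 m)
      simp [hWdef, norm_smul, abs_of_nonneg (inv_nonneg.mpr (norm_nonneg _)),
        inv_mul_cancel₀ hz]
    obtain ⟨W0, hW0s, φ, hφ, hWlim⟩ := (isCompact_sphere (0:A) 1).tendsto_subseq hWs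
    have hW0M : W0 ∈ M := by
      have hWM : ∀ m, W m ∈ M := fun m => M.smul_mem _ (hcM (X m))
      have hMc : IsClosed (M : Set A) := Submodule.closed_of_finiteDimensional M
      exact hMc.mem_of_tendsto hWlim (Eventually.of_forall fun j => hWM (φ j))
    have hW0K : W0 ∈ lieSet S := by
      intro t
      set c : ℕ → ℤ := fun j => round (t / ‖Z (φ j)‖) with hcdef
      have hZφ0 : Tendsto (fun j => ‖Z (φ j)‖) atTop (𝓝 0) := by
        have := (continuous_norm.tendsto (0:A)).comp (hZ0.comp hφ.tendsto_atTop)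
        simpa [Function.comp_def] using this
      have hcoef : Tendsto (fun j => (c j : ℝ) * ‖Z (φ j)‖) atTop (𝓝 t) := by
        rw [← sub_zero t] 
        apply Tendsto.congr (f₁ := fun j => t - (t - (c j : ℝ) * ‖Z (φ j)‖))
        · intro j; ring
        apply Tendsto.const_sub
        refine squeeze_zero_norm (fun j => ?_) (by simpa using hZφ0.div_const 2)
        rcases eq_or_ne (‖Z (φ j)‖) 0 with h0 | h0
        · exact absurd (norm_eq_zero.mp h0) (ha4 (φ j))
        have habs : |t / ‖Z (φ j)‖ - ((c j : ℤ) : ℝ)| ≤ 1/2 := abs_sub_round _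
        have : t - (c j : ℝ) * ‖Z (φ j)‖ = (t / ‖Z (φ j)‖ - (c j:ℝ)) * ‖Z (φ j)‖ := by
          field_simp
        rw [Real.norm_eq_abs, this, abs_mul, abs_of_nonneg (norm_nonneg _)]
        calc |t / ‖Z (φ j)‖ - (c j:ℝ)| * ‖Z (φ j)‖ ≤ (1/2) * ‖Z (φ j)‖ := by
              apply mul_le_mul_of_nonneg_right _ (norm_nonneg _)
              exact habs
        _ = ‖Z (φ j)‖ / 2 := by ring
      have hmemS : ∀ j, exp ((c j : ℝ) • Z (φ j)) ∈ S := by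
        intro j
        have := exp_zsmul_mem hmul h1 hinv (hZS (φ j)) (c j)
        rwa [show ((c j : ℤ) • Z (φ j) : A) = (c j : ℝ) • Z (φ j) from
          Int.cast_smul_eq_zsmul ℝ _ _ |>.symm] at this
      have hlim : Tendsto (fun j => (c j : ℝ) • Z (φ j)) atTop (𝓝 (t • W0)) := by
        apply Tendsto.congr (f₁ := fun j => ((c j : ℝ) * ‖Z (φ j)‖) • W (φ j))
        · intro j
          have hz : ‖Z (φ j)‖ ≠ 0 := norm_ne_zero_iff.mpr (ha4 (φ j))
          rw [hWdef]
          simp only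
          rw [smul_smul, mul_assoc, mul_inv_cancel₀ hz, mul_one]
        · exact hcoef.smul hWlim
      exact hS.mem_of_tendsto ((exp_continuous.tendsto _).comp hlim)
        (Eventually.of_forall hmemS)
    have hW00 : W0 = 0 := Submodule.disjoint_def.mp hM.disjoint W0 hW0K hW0M
    rw [hW00] at hW0s
    simp at hW0s
  obtain ⟨δ, hδ, hδP⟩ := claim
  refine ⟨Metric.ball 1 δ ∩ Ψ.target, Metric.isOpen_ball.inter Ψ.open_target,
    ⟨Metric.mem_ball_self hδ, hΨ1⟩, ?_⟩
  rintro a haS ⟨hab, hat⟩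
  have hz : cM (Ψ.symm a) = 0 := hδP a (Metric.mem_ball.mp hab) haS hat
  set Y := cK (Ψ.symm a) with hYdef
  have ha : a = exp Y := by
    have h := Ψ.right_inv hat
    rw [hΨcoe, hψdef] at h
    simp only at h
    rw [hz, exp_zero, mul_one] at h
    exact h.symm
  have hYl : Y ∈ lieSet S := hcK _
  have hconn : IsPreconnected ((fun t : ℝ => exp (t • Y)) '' univ) :=
    isPreconnected_univ.image _
      ((exp_continuous.comp (continuous_id.smul continuous_const)).continuousOn)
  have hsub : ((fun t : ℝ => exp (t • Y)) '' univ) ⊆ S := by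
    rintro _ ⟨t, -, rfl⟩; exact hYl t
  have h1mem : (1:A) ∈ (fun t : ℝ => exp (t • Y)) '' univ :=
    ⟨0, mem_univ _, by simp⟩
  have := hconn.subset_connectedComponentIn h1mem hsub
  apply this
  exact ⟨1, mem_univ _, by simpa using ha.symm⟩

end BanachLie
section Transfer

variable {X Y : Type*} [TopologicalSpace X] [TopologicalSpace Y]

lemma IsEmbedding.image_connectedComponent' {f : X → Y} (hf : Topology.IsEmbedding f) (x : X) :
    f '' connectedComponent x = connectedComponentIn (Set.range f) (f x) := by
  let e : X ≃ₜ Set.range f := hf.toHomeomorph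
  have h1 : connectedComponentIn (Set.range f) (f x) =
      Subtype.val '' connectedComponent (e x) := by
    rw [connectedComponentIn_eq_image (Set.mem_range_self x)]
    rfl
  have h2 : e '' connectedComponent x = connectedComponent (e x) := by
    have h := e.image_connectedComponentIn (s := Set.univ) (Set.mem_univ x)
    rwa [connectedComponentIn_univ, Set.image_univ, e.range_coe,
      connectedComponentIn_univ] at h
  rw [h1, ← h2, ← Set.image_comp]
  rfl

lemma homeo_image_connectedComponentIn (h : X ≃ₜ Y) {s : Set X} {x : X} (hx : x ∈ s) :
    h '' connectedComponentIn s x = connectedComponentIn (h '' s) (h x) :=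
  h.image_connectedComponentIn hx

end Transfer

section GroupTop

variable {Γ : Type*} [Group Γ] [TopologicalSpace Γ] [IsTopologicalGroup Γ]

lemma idComp_coe (K : Subgroup Γ) :
    ((idComp K : Subgroup Γ) : Set Γ) = connectedComponentIn (K : Set Γ) 1 := by
  rw [connectedComponentIn_eq_image (K.one_mem)]
  rfl

lemma idComp_mono {K L : Subgroup Γ} (h : K ≤ L) : idComp K ≤ idComp L := by
  intro x hx
  have hx' : x ∈ (idComp K : Set Γ) := hx
  rw [idComp_coe] at hx'
  have := connectedComponentIn_mono (1:Γ) (show (K : Set Γ) ⊆ L from h) hx'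
  rwa [← SetLike.mem_coe, idComp_coe]

lemma idComp_le (K : Subgroup Γ) : idComp K ≤ K := by
  intro x hx
  have hx' : x ∈ (idComp K : Set Γ) := hx
  rw [idComp_coe] at hx'
  exact connectedComponentIn_subset _ _ hx'

lemma normalizer_le_of_idComp {K : Subgroup Γ} {H : Subgroup Γ} (hG0 : idComp K = H) :
    Subgroup.normalizer (K : Set Γ) ≤ Subgroup.normalizer (H : Set Γ) := by
  intro x hx
  rw [Subgroup.mem_normalizer_iff] at hx ⊢
  set e : Γ ≃ₜ Γ := (Homeomorph.mulLeft x).trans (Homeomorph.mulRight x⁻¹) with hedef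
  have hecoe : ∀ g, e g = x * g * x⁻¹ := fun g => rfl
  have himg : e '' (K : Set Γ) = (K : Set Γ) := by
    ext a
    simp only [Set.mem_image, SetLike.mem_coe]
    constructor
    · rintro ⟨g, hg, rfl⟩; exact (hx g).mp hg
    · intro ha
      refine ⟨x⁻¹ * a * x, ?_, ?_⟩
      · apply (hx _).mpr
        have : x * (x⁻¹ * a * x) * x⁻¹ = a := by group
        rwa [this]
      · rw [hecoe]; group
  have hHset : (H : Set Γ) = connectedComponentIn (K : Set Γ) 1 := by
    rw [← hG0, idComp_coe]
  have he1 : e 1 = 1 := by rw [hecoe]; group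
  have hmain : e '' (H : Set Γ) = (H : Set Γ) := by
    rw [hHset, homeo_image_connectedComponentIn e (K.one_mem), himg, he1]
  intro h
  constructor
  · intro hh
    have : e h ∈ e '' (H : Set Γ) := Set.mem_image_of_mem e hh
    rw [hmain] at this
    exact this
  · intro hh
    have hh' : x * h * x⁻¹ ∈ (H : Set Γ) := hh
    rw [← hmain] at hh'
    obtain ⟨g, hg, hge⟩ := hh'
    have : g = h := e.injective (by rw [hge]; rfl)
    rwa [← this]

lemma normalizer_isClosed {K : Subgroup Γ} (hK : IsClosed (K : Set Γ)) :
    IsClosed (Subgroup.normalizer (K : Set Γ) : Set Γ) := by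
  have hset : (Subgroup.normalizer (K : Set Γ) : Set Γ) =
      (⋂ g ∈ K, {x : Γ | x * g * x⁻¹ ∈ K}) ∩ (⋂ g ∈ K, {x : Γ | x⁻¹ * g * x ∈ K}) := by
    ext x
    simp only [Set.mem_inter_iff, Set.mem_iInter, Set.mem_setOf_eq, SetLike.mem_coe]
    constructor
    · intro hx
      rw [Subgroup.mem_normalizer_iff] at hx
      refine ⟨fun g hg => (hx g).mp hg, fun g hg => ?_⟩
      apply (hx (x⁻¹ * g * x)).mpr
      have : x * (x⁻¹ * g * x) * x⁻¹ = g := by group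
      rwa [this]
    · rintro ⟨ha, hb⟩
      rw [Subgroup.mem_normalizer_iff]
      intro g
      constructor
      · exact ha g
      · intro hg
        have := hb _ hg
        have heq : x⁻¹ * (x * g * x⁻¹) * x = g := by group
        rwa [heq] at this
  rw [hset]
  refine IsClosed.inter (isClosed_biInter fun g _ => ?_) (isClosed_biInter fun g _ => ?_)
  · exact hK.preimage ((continuous_id.mul continuous_const).mul continuous_inv)
  · exact hK.preimage ((continuous_inv.mul continuous_const).mul continuous_id)

end GroupTop
section OnSide

attribute [local instance] Matrix.linftyOpNormedRing Matrix.linftyOpNormedAlgebra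

lemma onCompact (n : ℕ) : CompactSpace (On n) := by
  have h : IsCompact ((Matrix.orthogonalGroup (Fin n) ℝ : Submonoid _) :
      Set (Matrix (Fin n) (Fin n) ℝ)) := by
    have hc : IsClosed ((Matrix.orthogonalGroup (Fin n) ℝ : Submonoid _) :
        Set (Matrix (Fin n) (Fin n) ℝ)) := by
      have heq : ((Matrix.orthogonalGroup (Fin n) ℝ : Submonoid _) :
          Set (Matrix (Fin n) (Fin n) ℝ)) =
          {A | star A * A = 1} ∩ {A | A * star A = 1} := by
        ext A
        exact Unitary.mem_iff
      rw [heq]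
      have h1 : Continuous fun A : Matrix (Fin n) (Fin n) ℝ => star A * A :=
        Continuous.matrix_mul continuous_star continuous_id
      have h2 : Continuous fun A : Matrix (Fin n) (Fin n) ℝ => A * star A :=
        Continuous.matrix_mul continuous_id continuous_star
      exact (isClosed_singleton.preimage h1).inter (isClosed_singleton.preimage h2)
    have hsub : ((Matrix.orthogonalGroup (Fin n) ℝ : Submonoid _) :
        Set (Matrix (Fin n) (Fin n) ℝ)) ⊆
        (Set.pi Set.univ fun _ : Fin n => Set.pi Set.univ fun _ : Fin n =>
          Set.Icc (-1:ℝ) 1) := by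
      intro A hA
      refine Set.mem_univ_pi.mpr ?_
      intro i
      rw [Set.mem_univ_pi]
      intro j
      have h2 := (Unitary.mem_iff.mp hA).1
      have hdiag : ∑ k, A k j * A k j = 1 := by
        have h3 := congrArg (fun B => B j j) h2
        simpa [Matrix.mul_apply, Matrix.star_apply, Matrix.one_apply] using h3
      have hle : A i j * A i j ≤ 1 := by
        rw [← hdiag]
        exact Finset.single_le_sum (fun k _ => mul_self_nonneg (A k j)) (Finset.mem_univ i)
      have habs : |A i j| ≤ 1 := abs_le_one_iff_mul_self_le_one.mpr hle
      exact Set.mem_Icc.mpr (abs_le.mp habs)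
    have hpi : IsCompact (Set.pi Set.univ fun _ : Fin n => Set.pi Set.univ fun _ : Fin n =>
        Set.Icc (-1:ℝ) 1) :=
      isCompact_univ_pi fun _ => isCompact_univ_pi fun _ => isCompact_Icc
    exact hpi.of_isClosed_subset hc hsub
  exact isCompact_iff_compactSpace.mp h

theorem key_step' (n : ℕ) (H : Subgroup (On n)) (hcl : IsClosed (H : Set (On n)))
    (hconn : IsConnected (H : Set (On n))) (hH : idComp (Subgroup.normalizer (H : Set (On n))) = H)
    (G : Subgroup (On n)) (hGcl : IsClosed (G : Set (On n))) (hG0 : idComp G = H) :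
    idComp (Subgroup.normalizer (G : Set (On n))) = H ∧ G.relIndex (Subgroup.normalizer (G : Set (On n))) ≠ 0 := by
  have hpart1 : idComp (Subgroup.normalizer (G : Set (On n))) = H := by
    apply le_antisymm
    · calc idComp (Subgroup.normalizer (G : Set (On n))) ≤ idComp (Subgroup.normalizer (H : Set (On n))) :=
            idComp_mono (normalizer_le_of_idComp hG0)
      _ = H := hH
    · calc H = idComp G := hG0.symm
      _ ≤ idComp (Subgroup.normalizer (G : Set (On n))) := idComp_mono (Subgroup.le_normalizer (H := G))
  refine ⟨hpart1, ?_⟩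
  have hHG : H ≤ G := hG0 ▸ idComp_le G
  set N := (Subgroup.normalizer (G : Set (On n))) with hNdef
  have hNcl : IsClosed (N : Set (On n)) := normalizer_isClosed hGcl
  haveI hOC : CompactSpace (On n) := onCompact n
  haveI : CompactSpace ↥N := isCompact_iff_compactSpace.mp hNcl.isCompact
  set S : Set (Matrix (Fin n) (Fin n) ℝ) := Subtype.val '' (N : Set (On n)) with hSdef
  have h1S : (1 : Matrix (Fin n) (Fin n) ℝ) ∈ S := ⟨1, N.one_mem, rfl⟩
  have hmulS : ∀ a ∈ S, ∀ b ∈ S, a * b ∈ S := by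
    rintro _ ⟨x, hx, rfl⟩ _ ⟨y, hy, rfl⟩
    exact ⟨x * y, N.mul_mem hx hy, rfl⟩
  have hinvS : ∀ a ∈ S, ∃ b ∈ S, a * b = 1 ∧ b * a = 1 := by
    rintro _ ⟨x, hx, rfl⟩
    refine ⟨((x⁻¹ : On n) : Matrix (Fin n) (Fin n) ℝ), ⟨x⁻¹, N.inv_mem hx, rfl⟩, ?_, ?_⟩
    · exact congrArg Subtype.val (mul_inv_cancel x)
    · exact congrArg Subtype.val (inv_mul_cancel x)
  have hScl : IsClosed S := (hNcl.isCompact.image continuous_subtype_val).isClosed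
  obtain ⟨U, hUo, hU1, hUP⟩ := exists_open_subset_connectedComponentIn hScl h1S hmulS hinvS
  set θ : ↥N → Matrix (Fin n) (Fin n) ℝ := fun y => ((y : On n) : Matrix (Fin n) (Fin n) ℝ)
    with hθdef
  have hθc : Continuous θ := continuous_subtype_val.comp continuous_subtype_val
  have hθe : Topology.IsEmbedding θ :=
    Topology.IsEmbedding.subtypeVal.comp Topology.IsEmbedding.subtypeVal
  have hrange : Set.range θ = S := by
    ext a
    constructor
    · rintro ⟨y, rfl⟩
      exact ⟨(y : On n), y.2, rfl⟩
    · rintro ⟨x, hx, rfl⟩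
      exact ⟨⟨x, hx⟩, rfl⟩
  have hcc : θ '' connectedComponent (1 : ↥N) = connectedComponentIn S 1 := by
    have h := IsEmbedding.image_connectedComponent' hθe (1 : ↥N)
    rw [hrange] at h
    exact h
  have hHc : Subtype.val '' connectedComponent (1 : ↥N) = (H : Set (On n)) := by
    rw [← hpart1]
    rfl
  have hmem : ((G.subgroupOf N : Subgroup ↥N) : Set ↥N) ∈ 𝓝 (1 : ↥N) := by
    have hpre : θ ⁻¹' U ∈ 𝓝 (1 : ↥N) :=
      hθc.continuousAt.preimage_mem_nhds (hUo.mem_nhds hU1)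
    filter_upwards [hpre] with y hy
    have hyS : θ y ∈ S := ⟨(y : On n), y.2, rfl⟩
    have h := hUP _ hyS hy
    replace h : θ y ∈ θ '' connectedComponent (1 : ↥N) := by rw [hcc]; exact h
    obtain ⟨w, hw, hwθ⟩ := h
    rw [hθe.injective hwθ] at hw
    have hyH : ((y : On n)) ∈ (H : Set (On n)) := by
      rw [← hHc]
      exact ⟨y, hw, rfl⟩
    exact Subgroup.mem_subgroupOf.mpr (hHG hyH)
  have hopen : IsOpen ((G.subgroupOf N) : Set ↥N) := Subgroup.isOpen_of_mem_nhds _ hmem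
  haveI : Finite (↥N ⧸ (G.subgroupOf N)) := Subgroup.quotient_finite_of_isOpen _ hopen
  exact Subgroup.index_ne_zero_of_finite

end OnSide

/-- If a closed connected `H ≤ O(n)` equals the identity component of its normalizer,
then any closed subgroup `G` with identity component `H` satisfies
`N_{O(n)}(G)⁰ = H`, and `G` has finite index in `N_{O(n)}(G)`. -/
theorem key_step (n : ℕ) (H : Subgroup (On n)) (hcl : IsClosed (H : Set (On n)))
    (hconn : IsConnected (H : Set (On n))) (hH : idComp (Subgroup.normalizer (H : Set (On n))) = H)
    (G : Subgroup (On n)) (hGcl : IsClosed (G : Set (On n))) (hG0 : idComp G = H) :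
    idComp (Subgroup.normalizer (G : Set (On n))) = H ∧ G.relIndex (Subgroup.normalizer (G : Set (On n))) ≠ 0 :=
  key_step' n H hcl hconn hH G hGcl hG0
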